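/- Let k be a nonzero integer, λ ∈ ℝ, t₀ ∈ ℝ, and let U be an open neighborhood of t₀. Let φ, φ₁, φ₂ : U → ℝ satisfy, for all t ∈ U: φ(t) ≠ 0, φ has derivative φ₁(t) at t, φ₁ has derivative φ₂(t) at t, φ₁(t)² = (2/k)·(1 − φ(t)^k), and φ₂(t) = −φ(t)^{k−1}. Set z₀ = φ(t₀)^k. Let V be an open neighborhood of z₀ with φ(t)^k ∈ V for all t ∈ U, and let X, X₁ : V → ℝ be such that X has derivative X₁(z) at every z ∈ V and X₁ has derivative X₂ at z₀. If the composite x(t) = X(φ(t)^k) is twice differentiable at t₀ with second derivative equal to −λ·φ(t₀)^{k−2}·x(t₀), then 2k·z₀·(1−z₀)·X₂ + (2(k−1)(1−z₀) − k·z₀)·X₁(z₀) + λ·X(z₀) = 0. -/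

import Mathlib

/-- The Yoshida change of variable `z = φ(t)^k`: if `φ` satisfies
`φ̇² = (2/k)(1 − φ^k)` and `φ̈ = −φ^{k−1}` on a neighborhood of `t₀`, `X` is a `C²`
function of `z` near `z₀ = φ(t₀)^k`, and the composite `x(t) = X(φ(t)^k)` satisfies
`ẍ(t₀) = −λ·φ(t₀)^{k−2}·x(t₀)`, then
`2kz₀(1−z₀)X″(z₀) + (2(k−1)(1−z₀) − kz₀)X′(z₀) + λX(z₀) = 0`. -/
theorem stmt_15 (k : ℤ) (hk : k ≠ 0) (lam t₀ : ℝ)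
    (U : Set ℝ) (hU : IsOpen U) (ht₀ : t₀ ∈ U)
    (φ φ₁ φ₂ : ℝ → ℝ)
    (hφne : ∀ t ∈ U, φ t ≠ 0)
    (hφ' : ∀ t ∈ U, HasDerivAt φ (φ₁ t) t)
    (hφ'' : ∀ t ∈ U, HasDerivAt φ₁ (φ₂ t) t)
    (henergy : ∀ t ∈ U, (φ₁ t) ^ 2 = (2 / (k : ℝ)) * (1 - φ t ^ k))
    (hnewton : ∀ t ∈ U, φ₂ t = -(φ t ^ (k - 1)))
    (V : Set ℝ) (hV : IsOpen V) (hz₀ : φ t₀ ^ k ∈ V)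
    (hUV : ∀ t ∈ U, φ t ^ k ∈ V)
    (X X₁ : ℝ → ℝ) (X₂ : ℝ)
    (hX' : ∀ z ∈ V, HasDerivAt X (X₁ z) z)
    (hX'' : HasDerivAt X₁ X₂ (φ t₀ ^ k))
    (x₁ : ℝ → ℝ)
    (hx' : ∀ t ∈ U, HasDerivAt (fun s => X (φ s ^ k)) (x₁ t) t)
    (hx'' : HasDerivAt x₁ (-lam * φ t₀ ^ (k - 2) * X (φ t₀ ^ k)) t₀) :
    2 * (k : ℝ) * (φ t₀ ^ k) * (1 - φ t₀ ^ k) * X₂ +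
      (2 * ((k : ℝ) - 1) * (1 - φ t₀ ^ k) - (k : ℝ) * φ t₀ ^ k) * X₁ (φ t₀ ^ k) +
      lam * X (φ t₀ ^ k) = 0 := by
  -- derivative of z = φ^k
  have hzd : ∀ t ∈ U, HasDerivAt (fun s => φ s ^ k)
      ((k : ℝ) * φ t ^ (k - 1) * φ₁ t) t := fun t ht =>
    (hasDerivAt_zpow k (φ t) (Or.inl (hφne t ht))).comp t (hφ' t ht)
  -- x₁ equals the chain-rule expression on U
  have hx1 : ∀ t ∈ U, x₁ t = X₁ (φ t ^ k) * ((k : ℝ) * φ t ^ (k - 1) * φ₁ t) := by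
    intro t ht
    have h := (hX' (φ t ^ k) (hUV t ht)).comp t (hzd t ht)
    exact (hx' t ht).unique h
  set g : ℝ → ℝ := fun t => X₁ (φ t ^ k) * ((k : ℝ) * φ t ^ (k - 1) * φ₁ t) with hg
  have heq : g =ᶠ[nhds t₀] x₁ := by
    filter_upwards [hU.mem_nhds ht₀] with t ht
    exact (hx1 t ht).symm
  have hgd : HasDerivAt g (-lam * φ t₀ ^ (k - 2) * X (φ t₀ ^ k)) t₀ :=
    hx''.congr_of_eventuallyEq heq
  -- compute the derivative of g directly
  have h1 : HasDerivAt (fun t => X₁ (φ t ^ k))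
      (X₂ * ((k : ℝ) * φ t₀ ^ (k - 1) * φ₁ t₀)) t₀ :=
    hX''.comp t₀ (hzd t₀ ht₀)
  have h2 : HasDerivAt (fun t => (k : ℝ) * φ t ^ (k - 1) * φ₁ t)
      ((k : ℝ) * ((k : ℝ) - 1) * φ t₀ ^ (k - 2) * φ₁ t₀ * φ₁ t₀
        + (k : ℝ) * φ t₀ ^ (k - 1) * φ₂ t₀) t₀ := by
    have ha : HasDerivAt (fun t => (k : ℝ) * φ t ^ (k - 1))
        ((k : ℝ) * (((k : ℝ) - 1) * φ t₀ ^ (k - 2) * φ₁ t₀)) t₀ := by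
      have h := ((hasDerivAt_zpow (k - 1) (φ t₀) (Or.inl (hφne t₀ ht₀))).comp t₀
        (hφ' t₀ ht₀)).const_mul ((k : ℝ))
      refine h.congr_deriv ?_
      rw [show k - 1 - 1 = k - 2 from by ring]
      push_cast
      ring
    have := ha.mul (hφ'' t₀ ht₀)
    refine this.congr_deriv ?_
    ring
  have hgd2 : HasDerivAt g
      (X₂ * ((k : ℝ) * φ t₀ ^ (k - 1) * φ₁ t₀) * ((k : ℝ) * φ t₀ ^ (k - 1) * φ₁ t₀)
        + X₁ (φ t₀ ^ k) * ((k : ℝ) * ((k : ℝ) - 1) * φ t₀ ^ (k - 2) * φ₁ t₀ * φ₁ t₀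
          + (k : ℝ) * φ t₀ ^ (k - 1) * φ₂ t₀)) t₀ := h1.mul h2
  have key := hgd.unique hgd2
  -- algebra
  have ha : φ t₀ ≠ 0 := hφne t₀ ht₀
  have hkR : (k : ℝ) ≠ 0 := Int.cast_ne_zero.mpr hk
  have hN : φ₂ t₀ = -(φ t₀ ^ (k - 1)) := hnewton t₀ ht₀
  have hp : φ t₀ ^ (k - 2) ≠ 0 := zpow_ne_zero _ ha
  have ew : φ t₀ ^ k = φ t₀ ^ (k - 2) * φ t₀ ^ 2 := by
    rw [← zpow_natCast (φ t₀) 2, ← zpow_add₀ ha]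
    norm_num
  have e1 : φ t₀ ^ (k - 1) = φ t₀ ^ (k - 2) * φ t₀ := by
    calc φ t₀ ^ (k - 1) = φ t₀ ^ (k - 2 + 1) := by congr 1; ring
    _ = φ t₀ ^ (k - 2) * φ t₀ ^ (1 : ℤ) := zpow_add₀ ha _ _
    _ = φ t₀ ^ (k - 2) * φ t₀ := by rw [zpow_one]
  have hE2 : (k : ℝ) * (φ₁ t₀ * φ₁ t₀) = 2 * (1 - φ t₀ ^ k) := by
    have h := henergy t₀ ht₀
    rw [sq] at h
    rw [h]
    field_simp
  rw [hN, e1, ew] at key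
  rw [ew] at hE2 ⊢
  have hmain : (2 * (k : ℝ) * (φ t₀ ^ (k - 2) * φ t₀ ^ 2) *
        (1 - φ t₀ ^ (k - 2) * φ t₀ ^ 2) * X₂ +
      (2 * ((k : ℝ) - 1) * (1 - φ t₀ ^ (k - 2) * φ t₀ ^ 2) -
        (k : ℝ) * (φ t₀ ^ (k - 2) * φ t₀ ^ 2)) * X₁ (φ t₀ ^ (k - 2) * φ t₀ ^ 2) +
      lam * X (φ t₀ ^ (k - 2) * φ t₀ ^ 2)) * φ t₀ ^ (k - 2) = 0 := by
    linear_combination (-1 : ℝ) * key -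
      ((k : ℝ) * (φ t₀ ^ (k - 2)) ^ 2 * φ t₀ ^ 2 * X₂ +
        ((k : ℝ) - 1) * φ t₀ ^ (k - 2) * X₁ (φ t₀ ^ (k - 2) * φ t₀ ^ 2)) * hE2
  exact (mul_eq_zero.mp hmain).resolve_right hp
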